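/- If H is a minimal subgroup of GL₂(ℤ_S), then every maximal closed subgroup M of H satisfies M = (det|_H)⁻¹(det(M)), i.e., M is the full preimage in H under the determinant of its own determinant image; in particular, every maximal closed subgroup of H is normal in H. -/

import Mathlib

open Topology

/-- In a T2 topological monoid, the embedding of units into `M × Mᵐᵒᵖ` is a closed
embedding. -/
theorem units_isClosedEmbedding_embedProduct {M : Type*} [Monoid M] [TopologicalSpace M]
    [ContinuousMul M] [T2Space M] :
    Topology.IsClosedEmbedding (Units.embedProduct M) := by
  refine ⟨Units.isEmbedding_embedProduct, ?_⟩
  have hr : Set.range (Units.embedProduct M) =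
      {p : M × Mᵐᵒᵖ | p.1 * p.2.unop = 1 ∧ p.2.unop * p.1 = 1} := by
    ext x
    constructor
    · rintro ⟨u, rfl⟩
      exact ⟨u.val_inv, u.inv_val⟩
    · rintro ⟨h1, h2⟩
      exact ⟨⟨x.1, x.2.unop, h1, h2⟩, by simp [Units.embedProduct]⟩
  rw [hr]
  exact (isClosed_eq (continuous_fst.mul
      (MulOpposite.continuous_unop.comp continuous_snd)) continuous_const).inter
    (isClosed_eq ((MulOpposite.continuous_unop.comp continuous_snd).mul continuous_fst)
      continuous_const)

/-- Units of a compact T2 topological monoid form a compact space. -/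
theorem units_compactSpace {M : Type*} [Monoid M] [TopologicalSpace M]
    [ContinuousMul M] [T2Space M] [CompactSpace M] : CompactSpace Mˣ :=
  haveI : CompactSpace Mᵐᵒᵖ := MulOpposite.opHomeomorph.compactSpace
  units_isClosedEmbedding_embedProduct.compactSpace

/-- The determinant on `GL n R` is continuous. -/
theorem continuous_glDet {n R : Type*} [Fintype n] [DecidableEq n] [CommRing R]
    [TopologicalSpace R] [IsTopologicalRing R] :
    Continuous (Matrix.GeneralLinearGroup.det : GL n R →* Rˣ) := by
  apply Units.continuous_iff.2
  exact ⟨Units.continuous_val.matrix_det, Units.continuous_coe_inv.matrix_det⟩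

/-- If `H` is a minimal subgroup of `GL₂(ℤ_S) = ∏_{p ∈ S} GL₂(ℤ_p)` (i.e. a finite-index
closed subgroup with `det(H) = ℤ_Sˣ` such that `det(K) ≠ ℤ_Sˣ` for every proper closed
subgroup `K` of `H`), then every maximal closed subgroup `M` of `H` is the full preimage in
`H` under `det` of its own determinant image; in particular every maximal closed subgroup of
`H` is normal in `H`. -/
theorem maximal_closed_subgroup_of_minimal_is_det_preimage (S : Finset ℕ)
    (hprime : ∀ p ∈ S, Nat.Prime p) :
    haveI : ∀ p : {x // x ∈ S}, Fact (Nat.Prime p.1) := fun p => ⟨hprime p.1 p.2⟩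
    ∀ H : Subgroup (∀ p : {x // x ∈ S}, GL (Fin 2) ℤ_[p.1]),
      -- `H` is minimal:
      IsClosed (H : Set (∀ p : {x // x ∈ S}, GL (Fin 2) ℤ_[p.1])) →
      H.index ≠ 0 →
      Subgroup.map
        (Pi.monoidHom fun p : {x // x ∈ S} =>
          Matrix.GeneralLinearGroup.det.comp
            (Pi.evalMonoidHom (fun q : {x // x ∈ S} => GL (Fin 2) ℤ_[q.1]) p)) H = ⊤ →
      (∀ K : Subgroup (∀ p : {x // x ∈ S}, GL (Fin 2) ℤ_[p.1]),
        IsClosed (K : Set (∀ p : {x // x ∈ S}, GL (Fin 2) ℤ_[p.1])) → K < H →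
        Subgroup.map
          (Pi.monoidHom fun p : {x // x ∈ S} =>
            Matrix.GeneralLinearGroup.det.comp
              (Pi.evalMonoidHom (fun q : {x // x ∈ S} => GL (Fin 2) ℤ_[q.1]) p)) K ≠ ⊤) →
      -- conclusion: every maximal closed subgroup `M` of `H` is the full preimage of its
      -- determinant image, and is normal in `H`
      ∀ M : Subgroup (∀ p : {x // x ∈ S}, GL (Fin 2) ℤ_[p.1]),
        IsClosed (M : Set (∀ p : {x // x ∈ S}, GL (Fin 2) ℤ_[p.1])) → M < H →
        (∀ K : Subgroup (∀ p : {x // x ∈ S}, GL (Fin 2) ℤ_[p.1]),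
          IsClosed (K : Set (∀ p : {x // x ∈ S}, GL (Fin 2) ℤ_[p.1])) → M < K → K < H →
            False) →
        M = (Subgroup.comap
              (Pi.monoidHom fun p : {x // x ∈ S} =>
                Matrix.GeneralLinearGroup.det.comp
                  (Pi.evalMonoidHom (fun q : {x // x ∈ S} => GL (Fin 2) ℤ_[q.1]) p))
              (Subgroup.map
                (Pi.monoidHom fun p : {x // x ∈ S} =>
                  Matrix.GeneralLinearGroup.det.comp
                    (Pi.evalMonoidHom (fun q : {x // x ∈ S} => GL (Fin 2) ℤ_[q.1]) p)) M))
            ⊓ H ∧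
          (M.subgroupOf H).Normal := by
  set_option maxHeartbeats 1000000 in
  haveI : ∀ p : {x // x ∈ S}, Fact (Nat.Prime p.1) := fun p => ⟨hprime p.1 p.2⟩
  haveI : ∀ p : {x // x ∈ S}, CompactSpace (Matrix (Fin 2) (Fin 2) ℤ_[p.1]) := fun p =>
    inferInstanceAs (CompactSpace (Fin 2 → Fin 2 → ℤ_[p.1]))
  haveI : ∀ p : {x // x ∈ S}, CompactSpace (GL (Fin 2) ℤ_[p.1]) := fun p =>
    units_compactSpace
  intro H hHcl hHidx hHdet hmin M hMcl hMlt hmax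
  set d := Pi.monoidHom fun p : {x // x ∈ S} =>
      Matrix.GeneralLinearGroup.det.comp
        (Pi.evalMonoidHom (fun q : {x // x ∈ S} => GL (Fin 2) ℤ_[q.1]) p) with hd
  have hdcont : Continuous d := by
    apply continuous_pi
    intro p
    exact continuous_glDet.comp (continuous_apply p)
  set K := Subgroup.comap d (Subgroup.map d M) ⊓ H with hK
  have hKcl : IsClosed (K : Set (∀ p : {x // x ∈ S}, GL (Fin 2) ℤ_[p.1])) := by
    have himg : IsClosed ((Subgroup.map d M : Subgroup _) :
        Set (∀ p : {x // x ∈ S}, (ℤ_[p.1])ˣ)) := by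
      have : ((Subgroup.map d M : Subgroup _) : Set (∀ p : {x // x ∈ S}, (ℤ_[p.1])ˣ)) =
          d '' (M : Set _) := rfl
      rw [this]
      exact ((hMcl.isCompact).image hdcont).isClosed
    have : (K : Set (∀ p : {x // x ∈ S}, GL (Fin 2) ℤ_[p.1])) =
        (d ⁻¹' (Subgroup.map d M : Subgroup _)) ∩ (H : Set _) := rfl
    rw [this]
    exact (himg.preimage hdcont).inter hHcl
  have hle : M ≤ K := le_inf (Subgroup.le_comap_map d M) hMlt.le
  have hne : K ≠ H := by
    intro h
    apply hmin M hMcl hMlt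
    have hH : H ≤ Subgroup.comap d (Subgroup.map d M) := by
      rw [← h]; exact inf_le_left
    have : Subgroup.map d H ≤ Subgroup.map d M :=
      (Subgroup.map_mono hH).trans (Subgroup.map_comap_le d _)
    rw [hHdet] at this
    exact top_le_iff.mp this
  have hKltH : K < H := lt_of_le_of_ne inf_le_right hne
  have hMK : M = K := by
    by_contra hne'
    exact hmax K hKcl (lt_of_le_of_ne hle hne') hKltH
  refine ⟨hMK, ?_⟩
  constructor
  intro n hn g
  rw [Subgroup.mem_subgroupOf] at hn ⊢
  rw [hMK]
  have hcoe : ((g * n * g⁻¹ : H) : ∀ p : {x // x ∈ S}, GL (Fin 2) ℤ_[p.1]) =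
      (g : ∀ p : {x // x ∈ S}, GL (Fin 2) ℤ_[p.1]) * n * (g : _)⁻¹ := by
    push_cast; rfl
  have hdet : d ((g * n * g⁻¹ : H) : ∀ p : {x // x ∈ S}, GL (Fin 2) ℤ_[p.1]) =
      d (n : ∀ p : {x // x ∈ S}, GL (Fin 2) ℤ_[p.1]) := by
    rw [hcoe, d.map_mul, d.map_mul,
      show ((g⁻¹ : H) : ∀ p : {x // x ∈ S}, GL (Fin 2) ℤ_[p.1]) =
        ((g : ∀ p : {x // x ∈ S}, GL (Fin 2) ℤ_[p.1]))⁻¹ from rfl,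
      d.map_inv, mul_comm (d ((g : ∀ p : {x // x ∈ S}, GL (Fin 2) ℤ_[p.1]))), mul_assoc,
      mul_inv_cancel, mul_one]
  have hmem : d ((g * n * g⁻¹ : H) : ∀ p : {x // x ∈ S}, GL (Fin 2) ℤ_[p.1]) ∈
      Subgroup.map d M := by
    rw [hdet]
    exact Subgroup.mem_map.2 ⟨_, hn, rfl⟩
  exact Subgroup.mem_inf.mpr ⟨Subgroup.mem_comap.mpr hmem, SetLike.coe_mem _⟩
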